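/- Let ρ be the uniform probability measure on the closed unit disc X ⊂ ℝ². For θ ∈ ℝ, set x_θ = (cos θ, sin θ), μ_θ = ½(δ_{x_θ} + δ_{−x_θ}), and define T_θ : X → ℝ² by T_θ(x) = x_θ if ⟨x, x_θ⟩ ≥ 0 and T_θ(x) = −x_θ otherwise. Then: (a) (T_θ)_#ρ = μ_θ and T_θ is ρ-a.e. the gradient of the convex function x ↦ |⟨x, x_θ⟩|, so T_θ is the Monge map from ρ to μ_θ; (b) W₂(μ₀, μ_θ) ≤ |θ|; (c) for every θ ∈ (0, π/2], ‖T_θ − T₀‖²_{L²(ρ)} ≥ θ/π; consequently ‖T_θ − T₀‖_{L²(ρ)} ≥ π^{−1/2} W₂(μ₀, μ_θ)^{1/2}. In particular the Monge embedding μ ↦ T_μ is in general not better than ½-Hölder with respect to W₂. -/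

import Mathlib

open MeasureTheory
open scoped RealInnerProductSpace ENNReal

/-- The 2-Wasserstein distance, as the square root of the infimum of the quadratic transport
cost over couplings. -/
noncomputable def W2 (μ ν : Measure (EuclideanSpace ℝ (Fin 2))) : ℝ :=
  Real.sqrt (sInf {c : ℝ |
    ∃ γ : Measure (EuclideanSpace ℝ (Fin 2) × EuclideanSpace ℝ (Fin 2)),
      γ.map Prod.fst = μ ∧ γ.map Prod.snd = ν ∧ c = ∫ p, ‖p.1 - p.2‖ ^ 2 ∂γ})

/-- The point `x_θ = (cos θ, sin θ)` on the unit circle. -/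
noncomputable def xpt (θ : ℝ) : EuclideanSpace ℝ (Fin 2) :=
  (EuclideanSpace.equiv (Fin 2) ℝ).symm ![Real.cos θ, Real.sin θ]

/-- The uniform probability measure on the closed unit disc. -/
noncomputable def discUnif : Measure (EuclideanSpace ℝ (Fin 2)) :=
  (volume (Metric.closedBall (0 : EuclideanSpace ℝ (Fin 2)) 1))⁻¹ •
    volume.restrict (Metric.closedBall (0 : EuclideanSpace ℝ (Fin 2)) 1)

/-- The measure `μ_θ = ½ (δ_{x_θ} + δ_{−x_θ})`. -/
noncomputable def μθ (θ : ℝ) : Measure (EuclideanSpace ℝ (Fin 2)) :=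
  (2 : ℝ≥0∞)⁻¹ • (Measure.dirac (xpt θ) + Measure.dirac (-xpt θ))

/-- The map `T_θ` sending `x` to `x_θ` when `⟨x, x_θ⟩ ≥ 0` and to `−x_θ` otherwise. -/
noncomputable def Tθ (θ : ℝ) (x : EuclideanSpace ℝ (Fin 2)) : EuclideanSpace ℝ (Fin 2) :=
  if 0 ≤ ⟪x, xpt θ⟫ then xpt θ else -xpt θ

open Real Set Metric Pointwise

lemma inner_xpt (x : EuclideanSpace ℝ (Fin 2)) (ψ : ℝ) :
    ⟪x, xpt ψ⟫ = x 0 * Real.cos ψ + x 1 * Real.sin ψ := by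
  simp [PiLp.inner_apply, Fin.sum_univ_two, xpt, RCLike.inner_apply]
  ring

lemma norm_xpt (ψ : ℝ) : ‖xpt ψ‖ = 1 := by
  rw [EuclideanSpace.norm_eq]
  simp [Fin.sum_univ_two, xpt, Real.sin_sq_add_cos_sq]

lemma inner_xpt_xpt (a b : ℝ) : ⟪xpt a, xpt b⟫ = Real.cos (a - b) := by
  rw [inner_xpt, Real.cos_sub]
  simp [xpt]

-- continuity and measurability of x ↦ ⟪x, v⟫
lemma cont_inner (v : EuclideanSpace ℝ (Fin 2)) :
    Continuous fun x : EuclideanSpace ℝ (Fin 2) => ⟪x, v⟫ :=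
  continuous_id.inner continuous_const

lemma measSet_half (ψ : ℝ) :
    MeasurableSet {x : EuclideanSpace ℝ (Fin 2) | 0 ≤ ⟪x, xpt ψ⟫} :=
  measurableSet_le measurable_const (cont_inner (xpt ψ)).measurable

lemma measurable_T (ψ : ℝ) : Measurable (Tθ ψ) :=
  Measurable.ite (measSet_half ψ) measurable_const measurable_const

lemma hyp_null (ψ : ℝ) : volume {x : EuclideanSpace ℝ (Fin 2) | ⟪x, xpt ψ⟫ = 0} = 0 := by
  have h : {x : EuclideanSpace ℝ (Fin 2) | ⟪x, xpt ψ⟫ = 0}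
      = (LinearMap.ker (innerSL ℝ (xpt ψ)).toLinearMap : Set (EuclideanSpace ℝ (Fin 2))) := by
    ext x
    simp [LinearMap.mem_ker]
    constructor <;> intro h <;> linarith [real_inner_comm x (xpt ψ)]
  rw [h]
  refine Measure.addHaar_submodule _ _ (fun htop => ?_)
  have : (innerSL ℝ (xpt ψ)) (xpt ψ) = 0 := by
    have := htop ▸ (Submodule.mem_top (R := ℝ) (x := xpt ψ))
    simpa [LinearMap.mem_ker] using this
  rw [innerSL_apply_apply, real_inner_self_eq_norm_sq, norm_xpt] at this
  norm_num at this

lemma vol_disc : volume (closedBall (0 : EuclideanSpace ℝ (Fin 2)) 1) = ENNReal.ofReal π := by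
  rw [EuclideanSpace.volume_closedBall]
  have h2 : (Fintype.card (Fin 2) : ℝ) = 2 := by simp
  simp only [Fintype.card_fin]
  norm_num [Real.Gamma_two, Real.sq_sqrt Real.pi_pos.le]

lemma vol_neg (A : Set (EuclideanSpace ℝ (Fin 2))) : volume (-A) = volume A := by
  have h : -A = (-1 : ℝ) • A := by
    ext x
    simp [Set.mem_smul_set, Set.mem_neg]
  rw [h, Measure.addHaar_smul]
  simp

lemma discUnif_apply (A : Set (EuclideanSpace ℝ (Fin 2))) (hA : MeasurableSet A) :
    discUnif A = (ENNReal.ofReal π)⁻¹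
      * volume (A ∩ closedBall (0 : EuclideanSpace ℝ (Fin 2)) 1) := by
  rw [discUnif, Measure.smul_apply, Measure.restrict_apply hA, vol_disc, smul_eq_mul]

lemma pi_ofReal_ne_zero : ENNReal.ofReal π ≠ 0 := by
  simp [Real.pi_pos, ENNReal.ofReal_eq_zero, not_le]

instance : IsProbabilityMeasure discUnif := by
  constructor
  rw [discUnif_apply _ MeasurableSet.univ, Set.univ_inter, vol_disc,
    ENNReal.inv_mul_cancel pi_ofReal_ne_zero ENNReal.ofReal_ne_top]

lemma vol_half_disc (ψ : ℝ) :
    volume ({x : EuclideanSpace ℝ (Fin 2) | 0 ≤ ⟪x, xpt ψ⟫}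
      ∩ closedBall (0 : EuclideanSpace ℝ (Fin 2)) 1) = ENNReal.ofReal π / 2 := by
  set K := closedBall (0 : EuclideanSpace ℝ (Fin 2)) 1 with hK
  set H : Set (EuclideanSpace ℝ (Fin 2)) := {x | 0 ≤ ⟪x, xpt ψ⟫} with hH
  set H' : Set (EuclideanSpace ℝ (Fin 2)) := {x | ⟪x, xpt ψ⟫ ≤ 0} with hH'
  have hsymm : volume (H' ∩ K) = volume (H ∩ K) := by
    have h1 : H' ∩ K = -(H ∩ K) := by
      ext x
      simp only [Set.mem_inter_iff, Set.mem_neg, hH, hH', Set.mem_setOf_eq, hK,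
        mem_closedBall, dist_zero_right, inner_neg_left, norm_neg]
      constructor
      · rintro ⟨h1, h2⟩; exact ⟨by linarith, h2⟩
      · rintro ⟨h1, h2⟩; exact ⟨by linarith, h2⟩
    rw [h1, vol_neg]
  have hcup : (H ∩ K) ∪ (H' ∩ K) = K := by
    ext x
    simp only [Set.mem_union, Set.mem_inter_iff, hH, hH', Set.mem_setOf_eq]
    constructor
    · rintro (⟨_, h⟩ | ⟨_, h⟩) <;> exact h
    · intro h
      rcases le_total 0 (⟪x, xpt ψ⟫) with h0 | h0
      · exact Or.inl ⟨h0, h⟩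
      · exact Or.inr ⟨h0, h⟩
  have hcap : volume ((H ∩ K) ∩ (H' ∩ K)) = 0 := by
    refine measure_mono_null ?_ (hyp_null ψ)
    rintro x ⟨⟨h1, _⟩, ⟨h2, _⟩⟩
    exact le_antisymm h2 h1
  have htm : MeasurableSet (H' ∩ K) :=
    (measurableSet_le (cont_inner (xpt ψ)).measurable measurable_const).inter
      measurableSet_closedBall
  have hadd := measure_union_add_inter (μ := volume) (t := H' ∩ K) (H ∩ K) htm
  rw [hcup, hcap, add_zero, hsymm, ← two_mul, vol_disc] at hadd
  rw [ENNReal.eq_div_iff two_ne_zero ENNReal.ofNat_ne_top]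
  exact hadd.symm
lemma discUnif_half (ψ : ℝ) :
    discUnif {x : EuclideanSpace ℝ (Fin 2) | 0 ≤ ⟪x, xpt ψ⟫} = 2⁻¹ := by
  rw [discUnif_apply _ (measSet_half ψ), vol_half_disc ψ, ← mul_div_assoc,
    ENNReal.inv_mul_cancel pi_ofReal_ne_zero ENNReal.ofReal_ne_top, one_div]

lemma xpt_ne_neg (ψ : ℝ) : xpt ψ ≠ -xpt ψ := by
  intro h
  have h2 : ‖xpt ψ‖ = 0 := by
    have := congrArg (fun z => ‖z‖) h
    have h3 : (2 : ℝ) • xpt ψ = 0 := by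
      rw [two_smul]
      rw [eq_neg_iff_add_eq_zero] at h
      exact h
    have := norm_xpt ψ
    rw [show xpt ψ = (2:ℝ)⁻¹ • ((2:ℝ) • xpt ψ) by simp, h3] at this
    simpa using this.symm
  rw [norm_xpt] at h2; norm_num at h2

lemma map_T (ψ : ℝ) : Measure.map (Tθ ψ) discUnif = μθ ψ := by
  ext s hs
  rw [Measure.map_apply (measurable_T ψ) hs]
  have hcompl : discUnif ({x : EuclideanSpace ℝ (Fin 2) | 0 ≤ ⟪x, xpt ψ⟫}ᶜ) = 2⁻¹ := by
    rw [measure_compl (measSet_half ψ) (measure_ne_top _ _), measure_univ, discUnif_half ψ]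
    rw [← ENNReal.inv_two_add_inv_two, ENNReal.add_sub_cancel_right (by norm_num)]
  have hrhs : μθ ψ s = 2⁻¹ * (s.indicator 1 (xpt ψ) + s.indicator 1 (-xpt ψ)) := by
    rw [μθ, Measure.smul_apply, Measure.add_apply, smul_eq_mul,
      Measure.dirac_apply' _ hs, Measure.dirac_apply' _ hs]
  by_cases h1 : xpt ψ ∈ s <;> by_cases h2 : -xpt ψ ∈ s
  · have hpre : Tθ ψ ⁻¹' s = Set.univ := by
      ext x; simp only [Set.mem_preimage, Tθ, Set.mem_univ, iff_true]
      split_ifs <;> assumption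
    rw [hpre, hrhs, Set.indicator_of_mem h1, Set.indicator_of_mem h2, measure_univ]
    simp only [Pi.one_apply]
    rw [one_add_one_eq_two, ENNReal.inv_mul_cancel two_ne_zero ENNReal.ofNat_ne_top]
  · have hpre : Tθ ψ ⁻¹' s = {x : EuclideanSpace ℝ (Fin 2) | 0 ≤ ⟪x, xpt ψ⟫} := by
      ext x; simp only [Set.mem_preimage, Tθ, Set.mem_setOf_eq]
      split_ifs with h
      · exact iff_of_true h1 h
      · exact iff_of_false h2 h
    rw [hpre, hrhs, Set.indicator_of_mem h1, Set.indicator_of_notMem h2, discUnif_half ψ]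
    simp
  · have hpre : Tθ ψ ⁻¹' s = {x : EuclideanSpace ℝ (Fin 2) | 0 ≤ ⟪x, xpt ψ⟫}ᶜ := by
      ext x; simp only [Set.mem_preimage, Tθ, Set.mem_compl_iff, Set.mem_setOf_eq]
      split_ifs with h
      · exact iff_of_false h1 (fun hn => hn h)
      · exact iff_of_true h2 h
    rw [hpre, hrhs, Set.indicator_of_notMem h1, Set.indicator_of_mem h2, hcompl]
    simp
  · have hpre : Tθ ψ ⁻¹' s = ∅ := by
      ext x; simp only [Set.mem_preimage, Tθ, Set.mem_empty_iff_false, iff_false]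
      split_ifs <;> assumption
    rw [hpre, hrhs, Set.indicator_of_notMem h1, Set.indicator_of_notMem h2, measure_empty]
    simp

lemma convex_abs_inner (ψ : ℝ) :
    ConvexOn ℝ Set.univ (fun z : EuclideanSpace ℝ (Fin 2) => |⟪z, xpt ψ⟫|) := by
  have h := (convexOn_univ_norm (E := ℝ)).comp_affineMap
    ((innerSL ℝ (xpt ψ)).toLinearMap.toAffineMap)
  have he : (fun z : EuclideanSpace ℝ (Fin 2) => |⟪z, xpt ψ⟫|)
      = (norm : ℝ → ℝ) ∘ ((innerSL ℝ (xpt ψ)).toLinearMap.toAffineMap) := by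
    funext z
    simp [Real.norm_eq_abs, real_inner_comm]
  rw [he]
  simpa using h

lemma hasGradient_ae (ψ : ℝ) :
    ∀ᵐ x ∂discUnif, HasGradientAt (fun z : EuclideanSpace ℝ (Fin 2) => |⟪z, xpt ψ⟫|)
      (Tθ ψ x) x := by
  have hnull : discUnif {x : EuclideanSpace ℝ (Fin 2) | ⟪x, xpt ψ⟫ = 0} = 0 := by
    have hmeas : MeasurableSet {x : EuclideanSpace ℝ (Fin 2) | ⟪x, xpt ψ⟫ = 0} :=
      measurableSet_eq_fun (cont_inner (xpt ψ)).measurable measurable_const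
    rw [discUnif_apply _ hmeas]
    rw [measure_mono_null Set.inter_subset_left (hyp_null ψ), mul_zero]
  have hae : ∀ᵐ x ∂discUnif, ⟪x, xpt ψ⟫ ≠ 0 := by
    rw [ae_iff]
    simpa using hnull
  filter_upwards [hae] with x hx
  rcases hx.lt_or_gt with hneg | hpos
  · -- inner < 0 : Tθ ψ x = -xpt ψ
    have hT : Tθ ψ x = -xpt ψ := if_neg (not_le.mpr hneg)
    rw [hasGradientAt_iff_hasFDerivAt, hT]
    have hf : HasFDerivAt (fun z : EuclideanSpace ℝ (Fin 2) => |⟪z, xpt ψ⟫|)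
        (-(innerSL ℝ (xpt ψ))) x := by
      apply HasFDerivAt.congr_of_eventuallyEq ((innerSL ℝ (xpt ψ)).hasFDerivAt.neg)
      have hopen : IsOpen {z : EuclideanSpace ℝ (Fin 2) | ⟪z, xpt ψ⟫ < 0} :=
        isOpen_lt (cont_inner (xpt ψ)) continuous_const
      filter_upwards [hopen.mem_nhds hneg] with z hz
      rw [abs_of_neg hz]
      show -⟪z, xpt ψ⟫ = -((innerSL ℝ (xpt ψ)) z)
      rw [innerSL_apply_apply, real_inner_comm]
    have : InnerProductSpace.toDual ℝ (EuclideanSpace ℝ (Fin 2)) (-xpt ψ)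
        = -(innerSL ℝ (xpt ψ)) := by
      ext y
      simp [InnerProductSpace.toDual_apply_apply, inner_neg_left]
    rw [this]
    exact hf
  · have hT : Tθ ψ x = xpt ψ := if_pos hpos.le
    rw [hasGradientAt_iff_hasFDerivAt, hT]
    have hf : HasFDerivAt (fun z : EuclideanSpace ℝ (Fin 2) => |⟪z, xpt ψ⟫|)
        (innerSL ℝ (xpt ψ)) x := by
      apply HasFDerivAt.congr_of_eventuallyEq (innerSL ℝ (xpt ψ)).hasFDerivAt
      have hopen : IsOpen {z : EuclideanSpace ℝ (Fin 2) | 0 < ⟪z, xpt ψ⟫} :=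
        isOpen_lt continuous_const (cont_inner (xpt ψ))
      filter_upwards [hopen.mem_nhds hpos] with z hz
      rw [abs_of_pos hz]
      rw [innerSL_apply_apply, real_inner_comm]
    have : InnerProductSpace.toDual ℝ (EuclideanSpace ℝ (Fin 2)) (xpt ψ)
        = innerSL ℝ (xpt ψ) := by
      ext y
      simp [InnerProductSpace.toDual_apply_apply]
    rw [this]
    exact hf

lemma integrable_dirac_cost (a : EuclideanSpace ℝ (Fin 2) × EuclideanSpace ℝ (Fin 2)) :
    Integrable (fun p : EuclideanSpace ℝ (Fin 2) × EuclideanSpace ℝ (Fin 2)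
      => ‖p.1 - p.2‖ ^ 2) (Measure.dirac a) := by
  have hc : Continuous (fun p : EuclideanSpace ℝ (Fin 2) × EuclideanSpace ℝ (Fin 2)
      => ‖p.1 - p.2‖ ^ 2) := by continuity
  constructor
  · exact hc.aestronglyMeasurable
  · rw [HasFiniteIntegral, lintegral_dirac]
    exact ENNReal.coe_lt_top
lemma sq_dist_xpt (a b : ℝ) : ‖xpt a - xpt b‖ ^ 2 = 2 - 2 * Real.cos (a - b) := by
  rw [norm_sub_sq_real, inner_xpt_xpt, norm_xpt, norm_xpt]
  ring

lemma W2_le (ψ : ℝ) : W2 (μθ 0) (μθ ψ) ≤ |ψ| := by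
  set S := {c : ℝ |
    ∃ γ : Measure (EuclideanSpace ℝ (Fin 2) × EuclideanSpace ℝ (Fin 2)),
      γ.map Prod.fst = μθ 0 ∧ γ.map Prod.snd = μθ ψ ∧ c = ∫ p, ‖p.1 - p.2‖ ^ 2 ∂γ} with hS
  have hbdd : BddBelow S := by
    refine ⟨0, fun c hc => ?_⟩
    obtain ⟨γ, _, _, rfl⟩ := hc
    exact integral_nonneg (fun p => by positivity)
  have hmem : (2 - 2 * Real.cos ψ) ∈ S := by
    refine ⟨(2 : ℝ≥0∞)⁻¹ • (Measure.dirac ((xpt 0, xpt ψ))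
      + Measure.dirac ((-xpt 0, -xpt ψ))), ?_, ?_, ?_⟩
    · rw [Measure.map_smul, Measure.map_add _ _ measurable_fst,
        Measure.map_dirac' measurable_fst, Measure.map_dirac' measurable_fst]
      rfl
    · rw [Measure.map_smul, Measure.map_add _ _ measurable_snd,
        Measure.map_dirac' measurable_snd, Measure.map_dirac' measurable_snd]
      rfl
    · rw [integral_smul_measure, integral_add_measure (integrable_dirac_cost _)
        (integrable_dirac_cost _), integral_dirac, integral_dirac]
      simp only []
      have h1 : ‖(xpt 0, xpt ψ).1 - (xpt 0, xpt ψ).2‖ ^ 2 = 2 - 2 * Real.cos ψ := by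
        rw [sq_dist_xpt]; norm_num
      have h2 : ‖(-xpt 0, -xpt ψ).1 - (-xpt 0, -xpt ψ).2‖ ^ 2 = 2 - 2 * Real.cos ψ := by
        have : (-xpt 0 : EuclideanSpace ℝ (Fin 2)) - (-xpt ψ) = -(xpt 0 - xpt ψ) := by abel
        simp only [this, norm_neg]
        rw [sq_dist_xpt]; norm_num
      rw [h1, h2]
      simp only [ENNReal.toReal_inv, ENNReal.toReal_ofNat, smul_eq_mul]
      ring
  have hinf : sInf S ≤ 2 - 2 * Real.cos ψ := csInf_le hbdd hmem
  have hcos : 2 - 2 * Real.cos ψ ≤ ψ ^ 2 := by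
    have := Real.one_sub_sq_div_two_le_cos (x := ψ)
    nlinarith
  have h0 : (0 : ℝ) ≤ 2 - 2 * Real.cos ψ := by
    have := Real.cos_le_one ψ; nlinarith
  calc W2 (μθ 0) (μθ ψ) = Real.sqrt (sInf S) := rfl
    _ ≤ Real.sqrt (ψ ^ 2) := Real.sqrt_le_sqrt (hinf.trans hcos)
    _ = |ψ| := Real.sqrt_sq_eq_abs ψ

noncomputable def eqv : EuclideanSpace ℝ (Fin 2) ≃ᵐ ℝ × ℝ :=
  (MeasurableEquiv.toLp 2 (Fin 2 → ℝ)).symm.trans (MeasurableEquiv.finTwoArrow)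

lemma eqv_mp : MeasurePreserving eqv volume volume :=
  (volume_preserving_finTwoArrow ℝ).comp
    (EuclideanSpace.volume_preserving_symm_measurableEquiv_toLp (Fin 2))

lemma eqv_apply (x : EuclideanSpace ℝ (Fin 2)) : eqv x = (x 0, x 1) := rfl

lemma norm_T (ψ : ℝ) (x : EuclideanSpace ℝ (Fin 2)) : ‖Tθ ψ x‖ = 1 := by
  rw [Tθ]; split_ifs <;> simp [norm_xpt]

section Region
variable (θ : ℝ) (hθ1 : 0 < θ) (hθ2 : θ ≤ π / 2)

noncomputable def regA (θ : ℝ) : Set (EuclideanSpace ℝ (Fin 2)) :=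
  eqv ⁻¹' (regionBetween (fun x => -1 + x * (1 - Real.cos θ) / Real.sin θ)
    (fun x => -(x * Real.cos θ) / Real.sin θ) (Set.Ioo 0 (Real.sin θ)))

lemma regA_meas : MeasurableSet (regA θ) :=
  eqv.measurable (measurableSet_regionBetween
    (by fun_prop) (by fun_prop) measurableSet_Ioo)

include hθ1 hθ2

lemma sinθ_pos : 0 < Real.sin θ :=
  Real.sin_pos_of_pos_of_lt_pi hθ1 (lt_of_le_of_lt hθ2 (by linarith [Real.pi_pos]))

lemma cosθ_nonneg : 0 ≤ Real.cos θ :=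
  Real.cos_nonneg_of_mem_Icc ⟨by linarith [Real.pi_pos], hθ2⟩

lemma regA_vol : volume (regA θ) = ENNReal.ofReal (Real.sin θ / 2) := by
  have hs := sinθ_pos θ hθ1 hθ2
  have hc := cosθ_nonneg θ hθ1 hθ2
  rw [regA, eqv_mp.measure_preimage ((measurableSet_regionBetween
    (by fun_prop) (by fun_prop) measurableSet_Ioo).nullMeasurableSet)]
  rw [Measure.volume_eq_prod]
  rw [volume_regionBetween_eq_integral ?fint ?gint measurableSet_Ioo ?hfg]
  case fint => exact ((continuous_const.add ((continuous_id.mul continuous_const).div_const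
      _)).integrableOn_Icc (μ := volume)).mono_set Set.Ioo_subset_Icc_self
  case gint => exact ((((continuous_id.mul continuous_const).neg).div_const
      _).integrableOn_Icc (μ := volume)).mono_set Set.Ioo_subset_Icc_self
  case hfg =>
    intro x hx
    obtain ⟨hx0, hxs⟩ := hx
    rw [← mul_le_mul_iff_left₀ hs]
    have hsne : Real.sin θ ≠ 0 := ne_of_gt hs
    rw [add_mul, div_mul_cancel₀ _ hsne, div_mul_cancel₀ _ hsne]
    nlinarith
  · congr 1
    have hint : ∀ x : ℝ, ((fun x => -(x * Real.cos θ) / Real.sin θ)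
        - fun x => -1 + x * (1 - Real.cos θ) / Real.sin θ) x = 1 - x / Real.sin θ := by
      intro x
      simp only [Pi.sub_apply]
      field_simp
      ring
    rw [setIntegral_congr_fun measurableSet_Ioo (fun x _ => hint x),
      ← integral_Ioc_eq_integral_Ioo, ← intervalIntegral.integral_of_le hs.le,
      intervalIntegral.integral_sub intervalIntegrable_const
        (intervalIntegral.intervalIntegrable_id.div_const _),
      intervalIntegral.integral_div, integral_id, intervalIntegral.integral_const]
    have hsne : Real.sin θ ≠ 0 := ne_of_gt hs
    field_simp
    ring
end Region

section Region2
variable (θ : ℝ) (hθ1 : 0 < θ) (hθ2 : θ ≤ π / 2)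
include hθ1 hθ2

lemma regA_mem {x : EuclideanSpace ℝ (Fin 2)} (hx : x ∈ regA θ) :
    0 < ⟪x, xpt 0⟫ ∧ ⟪x, xpt θ⟫ < 0 ∧ x ∈ closedBall (0 : EuclideanSpace ℝ (Fin 2)) 1 := by
  have hs := sinθ_pos θ hθ1 hθ2
  have hc := cosθ_nonneg θ hθ1 hθ2
  have hsne : Real.sin θ ≠ 0 := ne_of_gt hs
  obtain ⟨hx1, hx2⟩ : (x 0 ∈ Set.Ioo 0 (Real.sin θ)) ∧
      x 1 ∈ Set.Ioo (-1 + x 0 * (1 - Real.cos θ) / Real.sin θ)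
        (-(x 0 * Real.cos θ) / Real.sin θ) := hx
  obtain ⟨hx0, hxs⟩ := hx1
  obtain ⟨hl, hu⟩ := hx2
  have hu' : x 1 * Real.sin θ < -(x 0 * Real.cos θ) := by
    rw [lt_div_iff₀ hs] at hu; exact hu
  have hl' : -Real.sin θ + x 0 * (1 - Real.cos θ) < x 1 * Real.sin θ := by
    rw [show (-1 + x 0 * (1 - Real.cos θ) / Real.sin θ)
        = (-Real.sin θ + x 0 * (1 - Real.cos θ)) / Real.sin θ by field_simp] at hl
    rw [div_lt_iff₀ hs] at hl; exact hl
  refine ⟨?_, ?_, ?_⟩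
  · rw [inner_xpt]; simp; exact hx0
  · rw [inner_xpt]
    nlinarith
  · rw [mem_closedBall, dist_zero_right, EuclideanSpace.norm_eq]
    rw [show (1:ℝ) = Real.sqrt 1 by simp]
    apply Real.sqrt_le_sqrt
    rw [Fin.sum_univ_two]
    simp only [Real.norm_eq_abs, sq_abs]
    have hpyth : Real.sin θ ^ 2 + Real.cos θ ^ 2 = 1 := Real.sin_sq_add_cos_sq θ
    have hc1 : Real.cos θ ≤ 1 := Real.cos_le_one θ
    have h5 : 0 ≤ (Real.sin θ - x 0) * (1 - Real.cos θ) * x 0 := by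
      apply mul_nonneg (mul_nonneg (by linarith) (by linarith)) hx0.le
    have hkey : (x 0 ^ 2 + x 1 ^ 2) * Real.sin θ ^ 2 ≤ 1 * Real.sin θ ^ 2 := by
      have ha2 : x 1 * Real.sin θ < 0 := lt_of_lt_of_le hu' (by nlinarith)
      have hsq : (x 1 * Real.sin θ)^2 < (-Real.sin θ + x 0 * (1 - Real.cos θ))^2 := by
        nlinarith
      have hid : x 0^2*Real.sin θ^2 + (-Real.sin θ + x 0*(1-Real.cos θ))^2 - Real.sin θ^2
          = -(2*x 0*(1-Real.cos θ)*(Real.sin θ - x 0))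
            + x 0^2*(Real.sin θ^2 + Real.cos θ^2 - 1) := by ring
      rw [hpyth] at hid
      nlinarith [hsq, hid, h5]
    have := le_of_mul_le_mul_right hkey (by positivity)
    linarith
end Region2

lemma integral_lb (θ : ℝ) (hθ1 : 0 < θ) (hθ2 : θ ≤ π / 2) :
    θ / π ≤ ∫ x, ‖Tθ θ x - Tθ 0 x‖ ^ 2 ∂discUnif := by
  have hs := sinθ_pos θ hθ1 hθ2
  have hc := cosθ_nonneg θ hθ1 hθ2
  have hπ := Real.pi_pos
  set A := regA θ with hAdef
  have hA : MeasurableSet A := regA_meas θ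
  have hB : MeasurableSet (-A) := hA.neg
  set M := A ∪ (-A) with hMdef
  have hM : MeasurableSet M := hA.union hB
  have hdisj : Disjoint A (-A) := by
    rw [Set.disjoint_left]
    intro x hxA hxB
    have h1 := (regA_mem θ hθ1 hθ2 hxA).1
    have h2 := (regA_mem θ hθ1 hθ2 (Set.mem_neg.mp hxB)).1
    rw [inner_neg_left] at h2
    linarith
  have hMK : M ⊆ closedBall (0 : EuclideanSpace ℝ (Fin 2)) 1 := by
    rintro x (hx | hx)
    · exact (regA_mem θ hθ1 hθ2 hx).2.2
    · have := (regA_mem θ hθ1 hθ2 (Set.mem_neg.mp hx)).2.2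
      rwa [mem_closedBall, dist_zero_right, norm_neg, ← dist_zero_right, ← mem_closedBall] at this
  have hMvol : discUnif M = (ENNReal.ofReal π)⁻¹ * ENNReal.ofReal (Real.sin θ) := by
    rw [discUnif_apply M hM, Set.inter_eq_self_of_subset_left hMK,
      measure_union hdisj hB, vol_neg, regA_vol θ hθ1 hθ2, ← ENNReal.ofReal_add
        (by positivity) (by positivity)]
    norm_num
  have hMreal : (discUnif M).toReal = Real.sin θ / π := by
    rw [hMvol, ENNReal.toReal_mul, ENNReal.toReal_inv, ENNReal.toReal_ofReal hπ.le,
      ENNReal.toReal_ofReal hs.le, inv_mul_eq_div]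
  have hnormsum : ‖xpt θ + xpt 0‖ ^ 2 = 2 + 2 * Real.cos θ := by
    rw [norm_add_sq_real, inner_xpt_xpt, norm_xpt, norm_xpt, sub_zero]
    ring
  have hlb : ∀ x ∈ M, (2 : ℝ) ≤ ‖Tθ θ x - Tθ 0 x‖ ^ 2 := by
    rintro x (hx | hx)
    · obtain ⟨h1, h2, -⟩ := regA_mem θ hθ1 hθ2 hx
      rw [show Tθ θ x = -xpt θ from if_neg (not_le.mpr h2),
        show Tθ 0 x = xpt 0 from if_pos h1.le,
        show -xpt θ - xpt 0 = -(xpt θ + xpt 0) by abel, norm_neg, hnormsum]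
      linarith
    · obtain ⟨h1, h2, -⟩ := regA_mem θ hθ1 hθ2 (Set.mem_neg.mp hx)
      rw [inner_neg_left] at h1 h2
      rw [show Tθ θ x = xpt θ from if_pos (by linarith),
        show Tθ 0 x = -xpt 0 from if_neg (not_le.mpr (by linarith)),
        sub_neg_eq_add, hnormsum]
      linarith
  have hmeas : Measurable (fun x : EuclideanSpace ℝ (Fin 2) => ‖Tθ θ x - Tθ 0 x‖ ^ 2) :=
    (((measurable_T θ).sub (measurable_T 0)).norm).pow_const 2
  have hint : Integrable (fun x : EuclideanSpace ℝ (Fin 2) => ‖Tθ θ x - Tθ 0 x‖ ^ 2) discUnif := by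
    apply Integrable.mono' (integrable_const (4 : ℝ)) hmeas.aestronglyMeasurable
    refine ae_of_all _ fun x => ?_
    rw [Real.norm_eq_abs, abs_of_nonneg (by positivity)]
    have h := norm_sub_le (Tθ θ x) (Tθ 0 x)
    rw [norm_T, norm_T] at h
    nlinarith [norm_nonneg (Tθ θ x - Tθ 0 x)]
  have h1 : ∫ x in M, ‖Tθ θ x - Tθ 0 x‖ ^ 2 ∂discUnif
      ≤ ∫ x, ‖Tθ θ x - Tθ 0 x‖ ^ 2 ∂discUnif :=
    setIntegral_le_integral hint (ae_of_all _ fun x => by positivity)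
  have h2 : 2 * (discUnif M).toReal ≤ ∫ x in M, ‖Tθ θ x - Tθ 0 x‖ ^ 2 ∂discUnif :=
    setIntegral_ge_of_const_le_real hM (measure_ne_top _ _) hlb hint.integrableOn
  have hj := Real.mul_le_sin hθ1.le hθ2
  rw [div_mul_eq_mul_div] at hj
  have hj' : 2 * θ ≤ Real.sin θ * π := (div_le_iff₀ hπ).mp hj
  have hπ4 := Real.pi_le_four
  have h3 : θ ≤ 2 * Real.sin θ := by
    nlinarith [mul_nonneg hs.le (by linarith : (0:ℝ) ≤ 4 - π)]
  have h4 : θ / π ≤ 2 * (Real.sin θ / π) := by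
    rw [← mul_div_assoc]
    exact (div_le_div_iff_of_pos_right hπ).mpr h3
  linarith [hMreal ▸ h2]

lemma sqrt_ineq (θ : ℝ) (hθ1 : 0 < θ) (hθ2 : θ ≤ π / 2) :
    Real.pi ^ (-(1 : ℝ) / 2) * Real.sqrt (W2 (μθ 0) (μθ θ)) ≤
      Real.sqrt (∫ x, ‖Tθ θ x - Tθ 0 x‖ ^ 2 ∂discUnif) := by
  have hπ := Real.pi_pos
  have hrw : (π : ℝ) ^ (-(1 : ℝ) / 2) = (Real.sqrt π)⁻¹ := by
    rw [neg_div, Real.rpow_neg hπ.le, ← Real.sqrt_eq_rpow]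
  have hW : W2 (μθ 0) (μθ θ) ≤ θ := (W2_le θ).trans_eq (abs_of_pos hθ1)
  have hI := integral_lb θ hθ1 hθ2
  calc π ^ (-(1 : ℝ) / 2) * Real.sqrt (W2 (μθ 0) (μθ θ))
      = Real.sqrt (W2 (μθ 0) (μθ θ)) / Real.sqrt π := by rw [hrw]; ring
    _ ≤ Real.sqrt θ / Real.sqrt π := by gcongr
    _ = Real.sqrt (θ / π) := (Real.sqrt_div hθ1.le π).symm
    _ ≤ Real.sqrt (∫ x, ‖Tθ θ x - Tθ 0 x‖ ^ 2 ∂discUnif) := Real.sqrt_le_sqrt hI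


/-- The Monge embedding is in general not better than ½-Hölder with respect to `W₂`:
(a) `T_θ` pushes the uniform measure `ρ` on the unit disc forward to `μ_θ` and is `ρ`-a.e. the
gradient of the convex function `x ↦ |⟨x, x_θ⟩|` (hence is the Monge map from `ρ` to `μ_θ`);
(b) `W₂(μ₀, μ_θ) ≤ |θ|`;
(c) for `θ ∈ (0, π/2]`, `‖T_θ − T₀‖²_{L²(ρ)} ≥ θ/π`, and consequently
`‖T_θ − T₀‖_{L²(ρ)} ≥ π^{-1/2} W₂(μ₀, μ_θ)^{1/2}`. -/
theorem monge_embedding_not_better_than_half_holder :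
    (∀ θ : ℝ, Measure.map (Tθ θ) discUnif = μθ θ) ∧
    (∀ θ : ℝ, ConvexOn ℝ Set.univ (fun z : EuclideanSpace ℝ (Fin 2) => |⟪z, xpt θ⟫|) ∧
      ∀ᵐ x ∂discUnif, HasGradientAt (fun z : EuclideanSpace ℝ (Fin 2) => |⟪z, xpt θ⟫|)
        (Tθ θ x) x) ∧
    (∀ θ : ℝ, W2 (μθ 0) (μθ θ) ≤ |θ|) ∧
    (∀ θ : ℝ, θ ∈ Set.Ioc 0 (Real.pi / 2) →
      (θ / Real.pi ≤ ∫ x, ‖Tθ θ x - Tθ 0 x‖ ^ 2 ∂discUnif) ∧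
      Real.pi ^ (-(1 : ℝ) / 2) * Real.sqrt (W2 (μθ 0) (μθ θ)) ≤
        Real.sqrt (∫ x, ‖Tθ θ x - Tθ 0 x‖ ^ 2 ∂discUnif)) :=
  ⟨map_T, fun θ => ⟨convex_abs_inner θ, hasGradient_ae θ⟩, W2_le,
    fun θ hθ => ⟨integral_lb θ hθ.1 hθ.2, sqrt_ineq θ hθ.1 hθ.2⟩⟩
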